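/- Let k be a field and R = k[X,Y,Z]/(X^{n+1} - YZ). For every m ∈ ℕ, writing m = l(n+1) + r with 0 ≤ r ≤ n, the k-vector space dimension of R/(X^m, Y^m, Z^m) equals (2 - 1/(n+1))·m² + r²/(n+1) - r. -/

import Mathlib

open MvPolynomial

noncomputable section

/-- The defining ideal of the `A_n` surface ring `k[X,Y,Z]/(X^{n+1} - YZ)`. -/
def anRel (k : Type*) [Field k] (n : ℕ) : Ideal (MvPolynomial (Fin 3) k) :=
  Ideal.span {X 0 ^ (n + 1) - X 1 * X 2}

namespace AnP
variable {k : Type*} [Field k]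

def exps (s : ℕ × ℕ) : Fin 2 →₀ ℕ := Finsupp.single 0 s.1 + Finsupp.single 1 s.2

@[simp] lemma exps_zero (s : ℕ × ℕ) : exps s 0 = s.1 := by simp [exps]
@[simp] lemma exps_one (s : ℕ × ℕ) : exps s 1 = s.2 := by simp [exps]

lemma exps_inj : Function.Injective exps := by
  intro s t h
  have h0 : exps s 0 = exps t 0 := by rw [h]
  have h1 : exps s 1 = exps t 1 := by rw [h]
  simp at h0 h1
  exact Prod.ext h0 h1

lemma exps_eta (e : Fin 2 →₀ ℕ) : exps (e 0, e 1) = e := by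
  ext i
  fin_cases i <;> simp [exps]

lemma exps_add (s t : ℕ × ℕ) : exps (s + t) = exps s + exps t := by
  ext i; fin_cases i <;> simp [exps]

def mu (k : Type*) [Field k] (s : ℕ × ℕ) : MvPolynomial (Fin 2) k := monomial (exps s) 1

def psi (k : Type*) [Field k] (n : ℕ) : MvPolynomial (Fin 3) k →ₐ[k] MvPolynomial (Fin 2) k :=
  aeval ![X 0 * X 1, X 0 ^ (n + 1), X 1 ^ (n + 1)]

lemma psi_pow_mul (n a b c : ℕ) :
    psi k n (X 0 ^ a * X 1 ^ b * X 2 ^ c) = mu k (a + b * (n+1), a + c * (n+1)) := by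
  simp only [psi, map_mul, map_pow, aeval_X, Matrix.cons_val_zero, Matrix.cons_val_one,
    Matrix.head_cons, Matrix.cons_val_two, Matrix.tail_cons]
  have h1 : ((X 0 * X 1 : MvPolynomial (Fin 2) k)) ^ a * (X 0 ^ (n+1)) ^ b * (X 1 ^ (n+1)) ^ c
      = X 0 ^ (a + b * (n+1)) * X 1 ^ (a + c * (n+1)) := by ring_nf
  rw [h1, mu, X_pow_eq_monomial, X_pow_eq_monomial, monomial_mul, one_mul]
  rfl


lemma mu_mul (s t : ℕ × ℕ) : mu k s * mu k t = mu k (s + t) := by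
  rw [mu, mu, mu, monomial_mul, one_mul, exps_add]

def mono (k : Type*) [Field k] (n : ℕ) (s : ℕ × ℕ) : MvPolynomial (Fin 3) k :=
  if s.2 ≤ s.1 then X 0 ^ s.2 * X 1 ^ ((s.1 - s.2) / (n + 1)) * X 2 ^ 0
  else X 0 ^ s.1 * X 1 ^ 0 * X 2 ^ ((s.2 - s.1) / (n + 1))

lemma psi_mono (n : ℕ) (s : ℕ × ℕ) (h : s.1 % (n+1) = s.2 % (n+1)) :
    psi k n (mono k n s) = mu k s := by
  rcases le_or_gt s.2 s.1 with h2 | h2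
  · have hdvd : (n+1) ∣ s.1 - s.2 := (Nat.modEq_iff_dvd' h2).mp h.symm
    rw [mono, if_pos h2, psi_pow_mul]
    congr 1
    have := Nat.div_mul_cancel hdvd
    exact Prod.ext (by omega) (by omega)
  · have hdvd : (n+1) ∣ s.2 - s.1 := (Nat.modEq_iff_dvd' h2.le).mp h
    rw [mono, if_neg (by omega), psi_pow_mul]
    congr 1
    have := Nat.div_mul_cancel hdvd
    exact Prod.ext (by omega) (by omega)

lemma psi_X (n : ℕ) (i : Fin 3) :
    psi k n (X i) = mu k (![(1,1), (n+1,0), (0,n+1)] i) := by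
  fin_cases i
  · have := psi_pow_mul (k := k) n 1 0 0; simpa using this
  · have := psi_pow_mul (k := k) n 0 1 0; simpa using this
  · have := psi_pow_mul (k := k) n 0 0 1; simpa using this

lemma support_mu (s : ℕ × ℕ) : (mu k s).support = {exps s} := by
  classical
  rw [mu, support_monomial, if_neg one_ne_zero]

lemma support_psi (n : ℕ) (p : MvPolynomial (Fin 3) k) :
    ∀ e ∈ (psi k n p).support, e 0 % (n+1) = e 1 % (n+1) := by
  induction p using MvPolynomial.induction_on with
  | C a =>
    intro e he
    rw [show psi k n (C a) = C a from by simp [psi, algHom_C]] at he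
    by_cases h0 : e = 0
    · subst h0; simp
    · rw [mem_support_iff, coeff_C, if_neg (by exact fun hh => h0 hh.symm)] at he
      exact absurd rfl he
  | add p q hp hq =>
    intro e he
    rw [map_add] at he
    rcases Finset.mem_union.mp (MvPolynomial.support_add he) with h | h
    · exact hp e h
    · exact hq e h
  | mul_X p i hp =>
    intro e he
    rw [map_mul, psi_X] at he
    have := MvPolynomial.support_mul _ _ he
    rw [support_mu] at this
    rcases Finset.mem_add.mp this with ⟨e1, he1, e2, he2, rfl⟩
    have h1 := hp e1 he1
    have h2 : e2 = exps (![(1,1), (n+1,0), (0,n+1)] i) := Finset.mem_singleton.mp he2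
    subst h2
    have key : (exps (![((1:ℕ),(1:ℕ)), (n+1,0), (0,n+1)] i)) 0 % (n+1)
        = (exps (![((1:ℕ),(1:ℕ)), (n+1,0), (0,n+1)] i)) 1 % (n+1) := by
      fin_cases i <;> simp [Nat.mod_self]
    simp only [Finsupp.add_apply]
    exact Nat.ModEq.add h1 key


lemma aux_pows {A : Type*} [CommRing A] (x y z : A) (d : ℕ) (h : y * z = x ^ d)
    (a b c : ℕ) (hcb : c ≤ b) :
    x ^ a * y ^ b * z ^ c = x ^ (a + c * d) * y ^ (b - c) * z ^ 0 := by
  conv_lhs => rw [← Nat.sub_add_cancel hcb]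
  calc x ^ a * y ^ (b - c + c) * z ^ c = x ^ a * y ^ (b - c) * (y * z) ^ c := by
        rw [pow_add, mul_pow]; ring
    _ = x ^ a * y ^ (b - c) * (x ^ d) ^ c := by rw [h]
    _ = x ^ (a + c * d) * y ^ (b - c) * z ^ 0 := by
        rw [← pow_mul, pow_add, pow_zero, mul_one, mul_comm d c]; ring

lemma mkrel (n : ℕ) :
    Ideal.Quotient.mk (anRel k n) (X 1) * Ideal.Quotient.mk (anRel k n) (X 2)
      = Ideal.Quotient.mk (anRel k n) (X 0) ^ (n + 1) := by
  rw [← map_mul, ← map_pow, Ideal.Quotient.mk_eq_mk_iff_sub_mem]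
  have : (X 1 * X 2 - X 0 ^ (n+1) : MvPolynomial (Fin 3) k)
      = -(X 0 ^ (n+1) - X 1 * X 2) := by ring
  rw [this]
  exact neg_mem (Ideal.subset_span (Set.mem_singleton _))

lemma mk_monomial (n a b c : ℕ) :
    Ideal.Quotient.mk (anRel k n) (X 0 ^ a * X 1 ^ b * X 2 ^ c)
      = Ideal.Quotient.mk (anRel k n) (mono k n (a + b * (n+1), a + c * (n+1))) := by
  rcases le_or_gt c b with h | h
  · have hle : a + c * (n+1) ≤ a + b * (n+1) := by
      have := Nat.mul_le_mul_right (n+1) h; omega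
    have hsub : (a + b * (n+1)) - (a + c * (n+1)) = (b - c) * (n+1) := by
      have := Nat.sub_mul b c (n+1); omega
    rw [mono, if_pos hle]
    simp only [hsub, Nat.mul_div_cancel _ (Nat.succ_pos n)]
    simp only [map_mul, map_pow]
    exact aux_pows _ _ _ (n+1) (mkrel n) a b c h
  · have hle : ¬ (a + c * (n+1) ≤ a + b * (n+1)) := by
      have h1 : (b+1) * (n+1) ≤ c * (n+1) := Nat.mul_le_mul_right _ h
      have h2 : (b+1) * (n+1) = b * (n+1) + (n+1) := by ring
      omega
    have hsub : (a + c * (n+1)) - (a + b * (n+1)) = (c - b) * (n+1) := by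
      have := Nat.sub_mul c b (n+1); omega
    rw [mono, if_neg hle]
    simp only [hsub, Nat.mul_div_cancel _ (Nat.succ_pos n)]
    simp only [map_mul, map_pow]
    have := aux_pows (Ideal.Quotient.mk (anRel k n) (X 0)) (Ideal.Quotient.mk (anRel k n) (X 2))
      (Ideal.Quotient.mk (anRel k n) (X 1)) (n+1) (by rw [mul_comm]; exact mkrel n) a c b h.le
    calc Ideal.Quotient.mk (anRel k n) (X 0) ^ a * Ideal.Quotient.mk (anRel k n) (X 1) ^ b *
          Ideal.Quotient.mk (anRel k n) (X 2) ^ c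
        = Ideal.Quotient.mk (anRel k n) (X 0) ^ a * Ideal.Quotient.mk (anRel k n) (X 2) ^ c *
          Ideal.Quotient.mk (anRel k n) (X 1) ^ b := by ring
      _ = Ideal.Quotient.mk (anRel k n) (X 0) ^ (a + b * (n+1)) *
          Ideal.Quotient.mk (anRel k n) (X 2) ^ (c - b) *
          Ideal.Quotient.mk (anRel k n) (X 1) ^ 0 := this
      _ = _ := by ring

lemma monomial_as_prod (u : Fin 3 →₀ ℕ) (a : k) :
    monomial u a = C a * (X 0 ^ u 0 * X 1 ^ u 1 * X 2 ^ u 2) := by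
  rw [monomial_eq]
  congr 1
  rw [Finsupp.prod_fintype _ _ (fun i => pow_zero _), Fin.prod_univ_three]

lemma exists_std (n : ℕ) (p : MvPolynomial (Fin 3) k) :
    ∃ c : {s : ℕ × ℕ // s.1 % (n+1) = s.2 % (n+1)} →₀ k,
      p - c.sum (fun s a => a • mono k n s.1) ∈ anRel k n := by
  induction p using MvPolynomial.induction_on' with
  | monomial u a =>
    refine ⟨Finsupp.single ⟨(u 0 + u 1 * (n+1), u 0 + u 2 * (n+1)), by
      simp [Nat.add_mul_mod_self_right]⟩ a, ?_⟩
    rw [Finsupp.sum_single_index (by simp)]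
    rw [← Ideal.Quotient.mk_eq_mk_iff_sub_mem]
    rw [monomial_as_prod, smul_eq_C_mul]
    conv_lhs => rw [map_mul]
    conv_rhs => rw [map_mul]
    rw [mk_monomial]
  | add p q hp hq =>
    obtain ⟨cp, hcp⟩ := hp
    obtain ⟨cq, hcq⟩ := hq
    refine ⟨cp + cq, ?_⟩
    rw [Finsupp.sum_add_index' (by intro s; simp) (by intro s a b; rw [add_smul])]
    have := Ideal.add_mem (anRel k n) hcp hcq
    convert this using 1
    ring

lemma psi_anRel (n : ℕ) {p : MvPolynomial (Fin 3) k} (hp : p ∈ anRel k n) : psi k n p = 0 := by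
  rw [anRel] at hp
  obtain ⟨q, hq⟩ := Ideal.mem_span_singleton'.mp hp
  have hrel : psi k n (X 0 ^ (n+1) - X 1 * X 2) = 0 := by
    rw [map_sub]
    have h1 := psi_pow_mul (k := k) n (n+1) 0 0
    have h2 := psi_pow_mul (k := k) n 0 1 1
    simp only [pow_zero, mul_one, one_mul, pow_one, zero_add] at h1 h2
    rw [h1, h2]
    norm_num
  rw [← hq, map_mul, hrel, mul_zero]

set_option maxHeartbeats 1000000 in
lemma mu_li (n : ℕ) :
    LinearIndependent k (fun s : {s : ℕ × ℕ // s.1 % (n+1) = s.2 % (n+1)} => mu k s.1) := by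
  have h := (basisMonomials (Fin 2) k).linearIndependent
  rw [coe_basisMonomials] at h
  have h2 := h.comp (fun s : {s : ℕ × ℕ // s.1 % (n+1) = s.2 % (n+1)} => exps s.1)
    (exps_inj.comp Subtype.val_injective)
  exact h2

lemma mem_anRel_of_psi_eq_zero (n : ℕ) {p : MvPolynomial (Fin 3) k}
    (hp : psi k n p = 0) : p ∈ anRel k n := by
  obtain ⟨c, hc⟩ := exists_std n p
  set q := c.sum (fun s a => a • mono k n s.1) with hqdef
  have hq0 : psi k n q = 0 := by
    have h1 := psi_anRel n hc
    rw [map_sub, hp, zero_sub, neg_eq_zero] at h1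
    exact h1
  have hqmu : psi k n q = c.sum (fun s a => a • mu k s.1) := by
    rw [hqdef, map_finsuppSum]
    exact Finsupp.sum_congr (fun s _ => by rw [map_smul, psi_mono n s.1 s.2])
  have hc0 : c = 0 := by
    apply linearIndependent_iff.mp (mu_li n)
    rw [Finsupp.linearCombination_apply, ← hqmu, hq0]
  rw [hc0] at hqdef
  simp only [Finsupp.sum_zero_index] at hqdef
  simpa [hqdef] using hc


def Tpred (n m : ℕ) (s : ℕ × ℕ) : Prop :=
  (m ≤ s.1 ∧ m ≤ s.2) ∨ m * (n+1) ≤ s.1 ∨ m * (n+1) ≤ s.2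

def Itot (k : Type*) [Field k] (n m : ℕ) : Ideal (MvPolynomial (Fin 3) k) :=
  anRel k n ⊔ Ideal.span {X 0 ^ m, X 1 ^ m, X 2 ^ m}

def lift (k : Type*) [Field k] (n m : ℕ) (s : ℕ × ℕ) : MvPolynomial (Fin 3) k :=
  if m ≤ s.1 ∧ m ≤ s.2 then X 0 ^ m * mono k n (s.1 - m, s.2 - m)
  else if m * (n+1) ≤ s.1 then X 1 ^ m * mono k n (s.1 - m * (n+1), s.2)
  else X 2 ^ m * mono k n (s.1, s.2 - m * (n+1))

lemma lift_mem (n m : ℕ) (s : ℕ × ℕ) :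
    lift k n m s ∈ Ideal.span ({X 0 ^ m, X 1 ^ m, X 2 ^ m} : Set (MvPolynomial (Fin 3) k)) := by
  rw [lift]
  split_ifs
  · exact Ideal.mul_mem_right _ _ (Ideal.subset_span (by simp))
  · exact Ideal.mul_mem_right _ _ (Ideal.subset_span (by simp))
  · exact Ideal.mul_mem_right _ _ (Ideal.subset_span (by simp))

lemma mod_sub_mod {d a b c : ℕ} (h : a % d = b % d) (ha : c ≤ a) (hb : c ≤ b) :
    (a - c) % d = (b - c) % d := by
  rcases le_total a b with hab | hab
  · have hd : d ∣ b - a := (Nat.modEq_iff_dvd' hab).mp h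
    have hd2 : d ∣ (b - c) - (a - c) := by
      have : (b - c) - (a - c) = b - a := by omega
      rwa [this]
    exact (Nat.modEq_iff_dvd' (by omega)).mpr hd2
  · have hd : d ∣ a - b := (Nat.modEq_iff_dvd' hab).mp h.symm
    have hd2 : d ∣ (a - c) - (b - c) := by
      have : (a - c) - (b - c) = a - b := by omega
      rwa [this]
    exact ((Nat.modEq_iff_dvd' (by omega)).mpr hd2).symm

lemma mod_sub_mul {d a q : ℕ} (h : q * d ≤ a) : (a - q * d) % d = a % d := by
  conv_rhs => rw [← Nat.sub_add_cancel h]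
  rw [Nat.add_mul_mod_self_right]

lemma psi_lift (n m : ℕ) (s : ℕ × ℕ) (hS : s.1 % (n+1) = s.2 % (n+1)) (hT : Tpred n m s) :
    psi k n (lift k n m s) = mu k s := by
  have hX0 : psi k n (X 0 ^ m) = mu k (m, m) := by
    have := psi_pow_mul (k := k) n m 0 0; simpa using this
  have hX1 : psi k n (X 1 ^ m) = mu k (m * (n+1), 0) := by
    have := psi_pow_mul (k := k) n 0 m 0; simpa using this
  have hX2 : psi k n (X 2 ^ m) = mu k (0, m * (n+1)) := by
    have := psi_pow_mul (k := k) n 0 0 m; simpa using this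
  rw [lift]
  split_ifs with h1 h2
  · rw [map_mul, hX0, psi_mono n _ (mod_sub_mod hS h1.1 h1.2), mu_mul]
    congr 1
    exact Prod.ext (by simp; omega) (by simp; omega)
  · rw [map_mul, hX1, psi_mono n _ (by simpa [mod_sub_mul h2] using hS), mu_mul]
    congr 1
    exact Prod.ext (by simp; omega) (by simp)
  · have h3 : m * (n+1) ≤ s.2 := by
      rcases hT with h | h | h
      · exact absurd h h1
      · exact absurd h h2
      · exact h
    rw [map_mul, hX2, psi_mono n _ (by rw [mod_sub_mul h3]; exact hS), mu_mul]
    congr 1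
    exact Prod.ext (by simp) (by simp; omega)

lemma Itot_eq_span (n m : ℕ) : Itot k n m
    = Ideal.span {X 0 ^ (n+1) - X 1 * X 2, X 0 ^ m, X 1 ^ m, X 2 ^ m} := by
  rw [Itot, anRel, ← Ideal.span_union, Set.singleton_union]

lemma support_Tpred_of_mem (n m : ℕ) {p : MvPolynomial (Fin 3) k} (hp : p ∈ Itot k n m) :
    ∀ e ∈ (psi k n p).support, Tpred n m (e 0, e 1) := by
  rw [Itot_eq_span] at hp
  induction hp using Submodule.span_induction with
  | mem x hx =>
    intro e he
    rcases hx with rfl | rfl | rfl | rfl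
    · have : psi k n (X 0 ^ (n+1) - X 1 * X 2) = 0 := by
        have h1 := psi_pow_mul (k := k) n (n+1) 0 0
        have h2 := psi_pow_mul (k := k) n 0 1 1
        simp only [pow_zero, mul_one, one_mul, pow_one, zero_add] at h1 h2
        rw [map_sub, h1, h2]; norm_num
      rw [this] at he
      simp at he
    · have := psi_pow_mul (k := k) n m 0 0
      simp only [pow_zero, mul_one, zero_mul, add_zero] at this
      rw [this, support_mu] at he
      rw [Finset.mem_singleton.mp he]
      exact Or.inl ⟨by simp, by simp⟩
    · have := psi_pow_mul (k := k) n 0 m 0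
      simp only [pow_zero, mul_one, one_mul, zero_mul, add_zero, zero_add, pow_zero] at this
      rw [this, support_mu] at he
      rw [Finset.mem_singleton.mp he]
      exact Or.inr (Or.inl (by simp))
    · have := psi_pow_mul (k := k) n 0 0 m
      simp only [pow_zero, mul_one, one_mul, zero_mul, add_zero, zero_add, pow_zero] at this
      rw [this, support_mu] at he
      rw [Finset.mem_singleton.mp he]
      exact Or.inr (Or.inr (by simp))
  | zero => intro e he; simp at he
  | add x y hx hy ihx ihy =>
    intro e he
    rw [map_add] at he
    rcases Finset.mem_union.mp (MvPolynomial.support_add he) with h | h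
    · exact ihx e h
    · exact ihy e h
  | smul r x hx ih =>
    intro e he
    rw [smul_eq_mul, map_mul] at he
    have := MvPolynomial.support_mul _ _ he
    rcases Finset.mem_add.mp this with ⟨e1, he1, e2, he2, rfl⟩
    have h2 := ih e2 he2
    simp only [Finsupp.add_apply]
    rcases h2 with ⟨ha, hb⟩ | h | h
    · exact Or.inl ⟨by omega, by omega⟩
    · exact Or.inr (Or.inl (by omega))
    · exact Or.inr (Or.inr (by omega))


lemma mem_Itot_of_support (n m : ℕ) {p : MvPolynomial (Fin 3) k}
    (H : ∀ e ∈ (psi k n p).support, Tpred n m (e 0, e 1)) : p ∈ Itot k n m := by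
  classical
  set p' := ∑ e ∈ (psi k n p).support.attach,
    coeff e.1 (psi k n p) • lift k n m (e.1 0, e.1 1) with hp'def
  have hp'mem : p' ∈ Itot k n m := by
    apply Submodule.sum_mem
    intro e _
    rw [smul_eq_C_mul]
    apply Ideal.mul_mem_left
    exact Ideal.mem_sup_right (lift_mem n m _)
  have hSe : ∀ e ∈ (psi k n p).support, (e : Fin 2 →₀ ℕ) 0 % (n+1) = e 1 % (n+1) :=
    support_psi n p
  have hpsi : psi k n p' = psi k n p := by
    rw [hp'def, map_sum]
    have : ∀ e ∈ (psi k n p).support.attach,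
        psi k n (coeff e.1 (psi k n p) • lift k n m (e.1 0, e.1 1))
          = monomial e.1 (coeff e.1 (psi k n p)) := by
      intro e _
      rw [map_smul, psi_lift n m _ (hSe e.1 e.2) (H e.1 e.2), mu]
      rw [exps_eta]
      rw [smul_monomial, smul_eq_mul, mul_one]
    rw [Finset.sum_congr rfl this,
      Finset.sum_attach ((psi k n p).support) (fun e => monomial e (coeff e (psi k n p)))]
    exact support_sum_monomial_coeff _
  have hker : p - p' ∈ anRel k n := by
    apply mem_anRel_of_psi_eq_zero
    rw [map_sub, hpsi, sub_self]
  have : p = (p - p') + p' := by ring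
  rw [this]
  exact Ideal.add_mem _ (Ideal.mem_sup_left hker) hp'mem

def Ffin (n m : ℕ) : Finset (ℕ × ℕ) :=
  (Finset.range (m*(n+1)) ×ˢ Finset.range (m*(n+1))).filter
    (fun s => s.1 % (n+1) = s.2 % (n+1) ∧ (s.1 < m ∨ s.2 < m))

lemma mem_Ffin_iff (n m : ℕ) (s : ℕ × ℕ) : s ∈ Ffin n m ↔
    (s.1 < m*(n+1) ∧ s.2 < m*(n+1)) ∧ s.1 % (n+1) = s.2 % (n+1) ∧ (s.1 < m ∨ s.2 < m) := by
  rw [Ffin, Finset.mem_filter, Finset.mem_product, Finset.mem_range, Finset.mem_range]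

def theta (k : Type*) [Field k] (n m : ℕ) :
    MvPolynomial (Fin 3) k →ₗ[k] (Ffin n m → k) :=
  LinearMap.pi fun f => (lcoeff k (exps f.1)).comp (psi k n).toLinearMap

lemma theta_apply (n m : ℕ) (p : MvPolynomial (Fin 3) k) (f : Ffin n m) :
    theta k n m p f = coeff (exps f.1) (psi k n p) := rfl

lemma not_Tpred_of_mem_Ffin (n m : ℕ) {s : ℕ × ℕ} (hs : s ∈ Ffin n m) : ¬ Tpred n m s := by
  rw [Ffin, Finset.mem_filter, Finset.mem_product, Finset.mem_range, Finset.mem_range] at hs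
  obtain ⟨⟨h1, h2⟩, _, h3⟩ := hs
  rw [Tpred]
  push_neg
  refine ⟨fun hm1 => ?_, by omega, by omega⟩
  omega

lemma mem_Ffin (n m : ℕ) {s : ℕ × ℕ} (hS : s.1 % (n+1) = s.2 % (n+1))
    (h1 : s.1 < m*(n+1)) (h2 : s.2 < m*(n+1)) (h3 : s.1 < m ∨ s.2 < m) : s ∈ Ffin n m := by
  rw [Ffin, Finset.mem_filter, Finset.mem_product]
  exact ⟨⟨Finset.mem_range.mpr h1, Finset.mem_range.mpr h2⟩, hS, h3⟩

lemma ker_theta (n m : ℕ) :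
    LinearMap.ker (theta k n m) = (Itot k n m).restrictScalars k := by
  ext p
  rw [LinearMap.mem_ker, Submodule.restrictScalars_mem]
  constructor
  · intro h
    apply mem_Itot_of_support n m
    intro e he
    have hSe := support_psi n p e he
    by_contra hT
    have hmem : ((e : Fin 2 →₀ ℕ) 0, e 1) ∈ Ffin n m := by
      rw [Tpred] at hT
      push_neg at hT
      apply mem_Ffin n m hSe (by omega) (by omega) (by omega)
    have := congrFun h ⟨(e 0, e 1), hmem⟩
    rw [theta_apply, exps_eta] at this
    rw [mem_support_iff] at he
    exact he this
  · intro h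
    funext f
    rw [theta_apply]
    by_contra hc
    have he : exps f.1 ∈ (psi k n p).support := mem_support_iff.mpr hc
    have := support_Tpred_of_mem n m h (exps f.1) he
    simp only [exps_zero, exps_one] at this
    exact not_Tpred_of_mem_Ffin n m f.2 this

lemma theta_surjective (n m : ℕ) : Function.Surjective (theta k n m) := by
  classical
  intro v
  refine ⟨∑ f ∈ (Ffin n m).attach, v f • mono k n f.1, ?_⟩
  funext f'
  rw [theta_apply, map_sum]
  have hSf : ∀ f : Ffin n m, (f : ℕ × ℕ).1 % (n+1) = (f : ℕ × ℕ).2 % (n+1) := by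
    intro f
    exact ((mem_Ffin_iff n m f.1).mp f.2).2.1
  have hterm : ∀ f ∈ (Ffin n m).attach,
      coeff (exps f'.1) (psi k n (v f • mono k n f.1))
        = if f = f' then v f else 0 := by
    intro f _
    rw [map_smul, psi_mono n _ (hSf f), mu]
    rw [coeff_smul, coeff_monomial]
    by_cases h : f = f'
    · rw [if_pos h, if_pos (by rw [h]), smul_eq_mul, mul_one]
    · rw [if_neg h, if_neg (fun hh => h (Subtype.ext (exps_inj hh))), smul_eq_mul, mul_zero]
  rw [MvPolynomial.coeff_sum]
  rw [Finset.sum_congr rfl hterm]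
  simp


lemma finrank_eq_card (n m : ℕ) :
    Module.finrank k
        ((MvPolynomial (Fin 3) k ⧸ anRel k n) ⧸
          Ideal.span {Ideal.Quotient.mk (anRel k n) (X 0) ^ m,
            Ideal.Quotient.mk (anRel k n) (X 1) ^ m,
            Ideal.Quotient.mk (anRel k n) (X 2) ^ m})
      = (Ffin n m).card := by
  have hspan : Ideal.span {Ideal.Quotient.mk (anRel k n) (X 0) ^ m,
      Ideal.Quotient.mk (anRel k n) (X 1) ^ m, Ideal.Quotient.mk (anRel k n) (X 2) ^ m}
      = (Ideal.span ({X 0 ^ m, X 1 ^ m, X 2 ^ m} : Set (MvPolynomial (Fin 3) k))).map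
          (Ideal.Quotient.mkₐ k (anRel k n)) := by
    rw [Ideal.map_span, Set.image_insert_eq, Set.image_insert_eq, Set.image_singleton]
    simp only [Ideal.Quotient.mkₐ_eq_mk, map_pow]
  rw [hspan]
  rw [(DoubleQuot.quotQuotEquivQuotSupₐ k (anRel k n)
    (Ideal.span {X 0 ^ m, X 1 ^ m, X 2 ^ m})).toLinearEquiv.finrank_eq]
  rw [show anRel k n ⊔ Ideal.span ({X 0 ^ m, X 1 ^ m, X 2 ^ m} :
    Set (MvPolynomial (Fin 3) k)) = Itot k n m from rfl]
  have e5 := Submodule.quotEquivOfEq (LinearMap.ker (theta k n m))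
    ((Itot k n m).restrictScalars k) (ker_theta n m)
  have e6 := (theta k n m).quotKerEquivOfSurjective (theta_surjective n m)
  have e3 : (MvPolynomial (Fin 3) k ⧸ Itot k n m) ≃ₗ[k] (Ffin n m → k) :=
    ((Submodule.Quotient.restrictScalarsEquiv k (Itot k n m)).symm.trans e5.symm).trans e6
  rw [e3.finrank_eq, Module.finrank_pi, Fintype.card_coe]


lemma lt_mul_of_div {d a b m : ℕ} (hd : 0 < d) (h : a / d + b < m) : a + b * d < m * d := by
  have h1 := Nat.div_add_mod a d
  have h2 : a % d < d := Nat.mod_lt _ hd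
  have h3 : (a/d + b + 1) * d ≤ m * d := Nat.mul_le_mul_right _ (by omega)
  have h4 : (a/d + b + 1) * d = d * (a/d) + b*d + d := by ring
  omega

lemma card_Ffin (n m : ℕ) : (Ffin n m).card
    = (∑ a ∈ Finset.range m, (m - a/(n+1))) + ∑ a ∈ Finset.range m, (m - a/(n+1) - 1) := by
  classical
  rw [← Finset.card_filter_add_card_filter_not (p := fun s : ℕ × ℕ => s.2 ≤ s.1)
    (s := Ffin n m)]
  congr 1
  · have hcs : (∑ a ∈ Finset.range m, (m - a/(n+1)))
        = ((Finset.range m).sigma fun a => Finset.range (m - a/(n+1))).card := by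
      rw [Finset.card_sigma]
      exact Finset.sum_congr rfl fun a _ => (Finset.card_range _).symm
    rw [hcs]
    apply Finset.card_bij' (fun s _ => (⟨s.2, (s.1 - s.2)/(n+1)⟩ : Σ _ : ℕ, ℕ))
      (fun x _ => ((x.1 + x.2 * (n+1), x.1) : ℕ × ℕ))
    · intro s hs
      rw [Finset.mem_filter] at hs
      obtain ⟨hsF, hji⟩ := hs
      obtain ⟨⟨h1, h2⟩, hS, h3⟩ := (mem_Ffin_iff n m s).mp hsF
      rw [Finset.mem_sigma, Finset.mem_range, Finset.mem_range]
      have hdvd : (n+1) ∣ s.1 - s.2 := (Nat.modEq_iff_dvd' hji).mp hS.symm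
      obtain ⟨b, hb⟩ := hdvd
      have hb' : s.1 - s.2 = b * (n+1) := by rw [hb, mul_comm]
      have hq : (s.1 - s.2)/(n+1) = b := by rw [hb', Nat.mul_div_cancel _ (Nat.succ_pos n)]
      have hdiv : s.1 / (n+1) = s.2/(n+1) + b := by
        have hs1 : s.1 = s.2 + b * (n+1) := by omega
        rw [hs1, Nat.add_mul_div_right _ _ (Nat.succ_pos n)]
      have hlt : s.1/(n+1) < m := (Nat.div_lt_iff_lt_mul (Nat.succ_pos n)).mpr h1
      have hd2 : s.2/(n+1) ≤ s.2 := Nat.div_le_self _ _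
      dsimp only
      constructor
      · omega
      · rw [hq]
        omega
    · intro x hx
      rw [Finset.mem_sigma, Finset.mem_range, Finset.mem_range] at hx
      obtain ⟨ha, hb⟩ := hx
      rw [Finset.mem_filter]
      refine ⟨(mem_Ffin_iff n m _).mpr ⟨⟨?_, ?_⟩, ?_, ?_⟩, ?_⟩
      · exact lt_mul_of_div (Nat.succ_pos n) (by omega)
      · have : m ≤ m * (n+1) := Nat.le_mul_of_pos_right m (Nat.succ_pos n)
        simp only
        omega
      · simp only [Nat.add_mul_mod_self_right]
      · exact Or.inr ha
      · simp only
        omega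
    · intro s hs
      rw [Finset.mem_filter] at hs
      obtain ⟨hsF, hji⟩ := hs
      obtain ⟨⟨h1, h2⟩, hS, h3⟩ := (mem_Ffin_iff n m s).mp hsF
      have hdvd : (n+1) ∣ s.1 - s.2 := (Nat.modEq_iff_dvd' hji).mp hS.symm
      have := Nat.div_mul_cancel hdvd
      exact Prod.ext (by simp only; omega) rfl
    · intro x hx
      have h1 : x.1 + x.2 * (n+1) - x.1 = x.2 * (n+1) := by omega
      simp only [h1, Nat.mul_div_cancel _ (Nat.succ_pos n)]
  · have hcs : (∑ a ∈ Finset.range m, (m - a/(n+1) - 1))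
        = ((Finset.range m).sigma fun a => Finset.range (m - a/(n+1) - 1)).card := by
      rw [Finset.card_sigma]
      exact Finset.sum_congr rfl fun a _ => (Finset.card_range _).symm
    rw [hcs]
    apply Finset.card_bij' (fun s _ => (⟨s.1, (s.2 - s.1)/(n+1) - 1⟩ : Σ _ : ℕ, ℕ))
      (fun x _ => ((x.1, x.1 + (x.2 + 1) * (n+1)) : ℕ × ℕ))
    · intro s hs
      rw [Finset.mem_filter] at hs
      obtain ⟨hsF, hji⟩ := hs
      push_neg at hji
      obtain ⟨⟨h1, h2⟩, hS, h3⟩ := (mem_Ffin_iff n m s).mp hsF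
      rw [Finset.mem_sigma, Finset.mem_range, Finset.mem_range]
      have hdvd : (n+1) ∣ s.2 - s.1 := (Nat.modEq_iff_dvd' hji.le).mp hS
      obtain ⟨c, hc⟩ := hdvd
      have hc' : s.2 - s.1 = c * (n+1) := by rw [hc, mul_comm]
      have hcpos : 1 ≤ c := by
        rcases Nat.eq_zero_or_pos c with h | h
        · subst h; omega
        · exact h
      have hq : (s.2 - s.1)/(n+1) = c := by rw [hc', Nat.mul_div_cancel _ (Nat.succ_pos n)]
      have hdiv : s.2 / (n+1) = s.1/(n+1) + c := by
        have hs2 : s.2 = s.1 + c * (n+1) := by omega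
        rw [hs2, Nat.add_mul_div_right _ _ (Nat.succ_pos n)]
      have hlt : s.2/(n+1) < m := (Nat.div_lt_iff_lt_mul (Nat.succ_pos n)).mpr h2
      have hd2 : s.1/(n+1) ≤ s.1 := Nat.div_le_self _ _
      dsimp only
      constructor
      · omega
      · rw [hq]
        omega
    · intro x hx
      rw [Finset.mem_sigma, Finset.mem_range, Finset.mem_range] at hx
      obtain ⟨ha, hb⟩ := hx
      rw [Finset.mem_filter]
      have hxd : x.1 / (n+1) ≤ x.1 := Nat.div_le_self _ _
      refine ⟨(mem_Ffin_iff n m _).mpr ⟨⟨?_, ?_⟩, ?_, ?_⟩, ?_⟩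
      · have : m ≤ m * (n+1) := Nat.le_mul_of_pos_right m (Nat.succ_pos n)
        simp only
        omega
      · exact lt_mul_of_div (Nat.succ_pos n) (by omega)
      · simp only [Nat.add_mul_mod_self_right]
      · exact Or.inl ha
      · simp only
        push_neg
        have : 0 < (x.2 + 1) * (n+1) := Nat.mul_pos (Nat.succ_pos _) (Nat.succ_pos _)
        omega
    · intro s hs
      rw [Finset.mem_filter] at hs
      obtain ⟨hsF, hji⟩ := hs
      push_neg at hji
      obtain ⟨⟨h1, h2⟩, hS, h3⟩ := (mem_Ffin_iff n m s).mp hsF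
      have hdvd : (n+1) ∣ s.2 - s.1 := (Nat.modEq_iff_dvd' hji.le).mp hS
      obtain ⟨c, hc⟩ := hdvd
      have hc' : s.2 - s.1 = c * (n+1) := by rw [hc, mul_comm]
      have hcpos : 1 ≤ c := by
        rcases Nat.eq_zero_or_pos c with h | h
        · subst h; omega
        · exact h
      have hq : (s.2 - s.1)/(n+1) = c := by rw [hc', Nat.mul_div_cancel _ (Nat.succ_pos n)]
      have hkey : ((s.2 - s.1)/(n+1) - 1 + 1) * (n+1) = c * (n+1) := by
        rw [hq]; congr 1; omega
      exact Prod.ext rfl (by simp only [hkey]; omega)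
    · intro x hx
      have h1 : x.1 + (x.2 + 1) * (n+1) - x.1 = (x.2 + 1) * (n+1) := by omega
      simp only [h1, Nat.mul_div_cancel _ (Nat.succ_pos n), Nat.add_sub_cancel]


lemma sum_div_q (n r : ℕ) (hr : r ≤ n) (l : ℕ) :
    (∑ a ∈ Finset.range (l*(n+1)+r), ((a/(n+1) : ℕ) : ℚ))
      = (n+1 : ℚ) * l * (l-1) / 2 + r * l := by
  induction l with
  | zero =>
    rw [Finset.sum_eq_zero]
    · push_cast; ring
    · intro a ha
      rw [Finset.mem_range] at ha
      rw [Nat.div_eq_of_lt (by omega)]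
      simp
  | succ l ih =>
    have hexp : (l+1)*(n+1) = l*(n+1)+(n+1) := by ring
    have hexp2 : (l+2)*(n+1) = l*(n+1)+(n+1)+(n+1) := by ring
    have hidx : (l+1)*(n+1)+r = (l*(n+1)+r) + (n+1) := by ring
    have h1 : l*(n+1)+r ≤ (l+1)*(n+1) := by omega
    have h2 : (l+1)*(n+1) ≤ l*(n+1)+r+(n+1) := by omega
    rw [hidx, Finset.range_eq_Ico,
      ← Finset.sum_Ico_consecutive (fun a => ((a/(n+1) : ℕ) : ℚ))
        (Nat.zero_le (l*(n+1)+r)) (Nat.le_add_right _ _),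
      ← Finset.sum_Ico_consecutive (fun a => ((a/(n+1) : ℕ) : ℚ)) h1 h2,
      ← Finset.range_eq_Ico, ih]
    have hexp3 : ((l+1)+1)*(n+1) = l*(n+1)+(n+1)+(n+1) := by ring
    have hc1' : ∀ a ∈ Finset.Ico (l*(n+1)+r) ((l+1)*(n+1)), ((a/(n+1) : ℕ) : ℚ) = (l:ℚ) := by
      intro a ha
      rw [Finset.mem_Ico] at ha
      rw [Nat.div_eq_of_lt_le (show l*(n+1) ≤ a by omega) (show a < (l+1)*(n+1) by omega)]
    have hc2' : ∀ a ∈ Finset.Ico ((l+1)*(n+1)) (l*(n+1)+r+(n+1)),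
        ((a/(n+1) : ℕ) : ℚ) = ((l:ℚ)+1) := by
      intro a ha
      rw [Finset.mem_Ico] at ha
      rw [Nat.div_eq_of_lt_le (show (l+1)*(n+1) ≤ a by omega)
        (show a < ((l+1)+1)*(n+1) by omega)]
      push_cast
      ring
    have c1 : ∑ a ∈ Finset.Ico (l*(n+1)+r) ((l+1)*(n+1)), ((a/(n+1) : ℕ) : ℚ)
        = ((n+1-r : ℕ) : ℚ) * l := by
      rw [Finset.sum_congr rfl hc1', Finset.sum_const, Nat.card_Ico,
        show (l+1)*(n+1) - (l*(n+1)+r) = n+1-r from by omega, nsmul_eq_mul]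
    have c2 : ∑ a ∈ Finset.Ico ((l+1)*(n+1)) (l*(n+1)+r+(n+1)), ((a/(n+1) : ℕ) : ℚ)
        = (r : ℚ) * ((l:ℚ)+1) := by
      rw [Finset.sum_congr rfl hc2', Finset.sum_const, Nat.card_Ico,
        show l*(n+1)+r+(n+1) - ((l+1)*(n+1)) = r from by omega, nsmul_eq_mul]
    rw [c1, c2, Nat.cast_sub (by omega)]
    push_cast
    ring

lemma card_Ffin_q (n m l r : ℕ) (hm : m = l*(n+1)+r) (hr : r ≤ n) :
    ((Ffin n m).card : ℚ) = (m:ℚ)*(2*m-1) - ((n+1:ℚ)*l*(l-1) + 2*r*l) := by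
  rw [card_Ffin, Nat.cast_add]
  have hda : ∀ a ∈ Finset.range m, a/(n+1) < m := fun a ha =>
    lt_of_le_of_lt (Nat.div_le_self a (n+1)) (Finset.mem_range.mp ha)
  have e1 : ((∑ a ∈ Finset.range m, (m - a/(n+1)) : ℕ) : ℚ)
      = ∑ a ∈ Finset.range m, ((m:ℚ) - ((a/(n+1) : ℕ) : ℚ)) := by
    rw [Nat.cast_sum]
    exact Finset.sum_congr rfl fun a ha => Nat.cast_sub (hda a ha).le
  have e2 : ((∑ a ∈ Finset.range m, (m - a/(n+1) - 1) : ℕ) : ℚ)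
      = ∑ a ∈ Finset.range m, ((m:ℚ) - ((a/(n+1) : ℕ) : ℚ) - 1) := by
    rw [Nat.cast_sum]
    refine Finset.sum_congr rfl fun a ha => ?_
    have := hda a ha
    rw [Nat.cast_sub (by omega), Nat.cast_sub (by omega)]
    norm_num
  rw [e1, e2, Finset.sum_sub_distrib, Finset.sum_sub_distrib, Finset.sum_sub_distrib,
    Finset.sum_const, Finset.card_range, nsmul_eq_mul, Finset.sum_const, Finset.card_range,
    nsmul_eq_mul]
  have hs := sum_div_q n r hr l
  rw [← hm] at hs
  rw [hs]
  
  ring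

end AnP

/-- For `R = k[X,Y,Z]/(X^{n+1} - YZ)` and `m = l(n+1) + r` with `0 ≤ r ≤ n`, the
`k`-dimension of `R/(X^m, Y^m, Z^m)` equals `(2 - 1/(n+1))·m² + r²/(n+1) - r`. -/
theorem stmt0 (k : Type*) [Field k] (n m l r : ℕ)
    (hm : m = l * (n + 1) + r) (hr : r ≤ n) :
    (Module.finrank k
        ((MvPolynomial (Fin 3) k ⧸ anRel k n) ⧸
          Ideal.span {Ideal.Quotient.mk (anRel k n) (X 0) ^ m,
            Ideal.Quotient.mk (anRel k n) (X 1) ^ m,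
            Ideal.Quotient.mk (anRel k n) (X 2) ^ m}) : ℚ) =
      (2 - 1 / ((n : ℚ) + 1)) * (m : ℚ) ^ 2 + (r : ℚ) ^ 2 / ((n : ℚ) + 1) - (r : ℚ) := by
  rw [AnP.finrank_eq_card n m, AnP.card_Ffin_q n m l r hm hr]
  have hm' : (m:ℚ) = (l:ℚ)*((n:ℚ)+1)+(r:ℚ) := by
    rw [hm]; push_cast; ring
  have hne : ((n:ℚ)+1) ≠ 0 := by positivity
  rw [hm']
  field_simp
  ring
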